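/- arXiv:2411.05766 — 3 statements merged into one kernel-verified Lean document; each statement's English description precedes it below -/
import Mathlib

section
/- For real numbers β, γ not both zero and any real α with 0 < α < 1, it holds that 2(β² + γ²)^α ≥ (β + γ)^{2α} + (β - γ)^{2α}. -/
open Real in
lemma rpow_add_le_aux {x y α : ℝ} (hx : 0 ≤ x) (hy : 0 ≤ y) (hα0 : 0 < α) (hα1 : α < 1) :
    x ^ α + y ^ α ≤ 2 * ((x + y) / 2) ^ α := by
  have hp : (1:ℝ) ≤ 1 / α := (one_le_div hα0).2 hα1.le
  have h := Real.arith_mean_le_rpow_mean (Finset.univ : Finset (Fin 2))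
      ![1/2, 1/2] ![x ^ α, y ^ α]
      (by intro i _; fin_cases i <;> norm_num)
      (by simp [Fin.sum_univ_two]; norm_num)
      (by intro i _; fin_cases i <;> simp [Real.rpow_nonneg hx, Real.rpow_nonneg hy]) hp
  simp only [Fin.sum_univ_two, Matrix.cons_val_zero, Matrix.cons_val_one, Matrix.head_cons,
    ← Real.rpow_mul hx, ← Real.rpow_mul hy, mul_one_div_cancel hα0.ne',
    Real.rpow_one, one_div_one_div] at h
  have e : 1 / 2 * x + 1 / 2 * y = (x + y) / 2 := by ring
  rw [e] at h
  linarith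

/-- For real numbers `β, γ` not both zero and any real `0 < α < 1`,
`2(β² + γ²)^α ≥ |β + γ|^(2α) + |β - γ|^(2α)`. -/
theorem stmt_2 (β γ α : ℝ) (hβγ : ¬(β = 0 ∧ γ = 0)) (hα0 : 0 < α) (hα1 : α < 1) :
    |β + γ| ^ (2 * α) + |β - γ| ^ (2 * α) ≤ 2 * (β ^ 2 + γ ^ 2) ^ α := by
  have h := rpow_add_le_aux (sq_nonneg (β + γ)) (sq_nonneg (β - γ)) hα0 hα1
  have e : ((β + γ) ^ 2 + (β - γ) ^ 2) / 2 = β ^ 2 + γ ^ 2 := by ring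
  rw [e] at h
  have e1 : ∀ u : ℝ, |u| ^ (2 * α) = (u ^ 2) ^ α := by
    intro u
    rw [Real.rpow_mul (abs_nonneg _), Real.rpow_two, sq_abs]
  rw [e1, e1]
  linarith
end

section
/- Let ρ be a 2^N × 2^N density matrix, Q a Hermitian unitary with Q² = I commuting with a Hermitian operator P, V_λ = (I + λQ)/2 for λ = ±1, p_λ = Tr(ρV_λ) with 0 < p_λ < 1, and ρ_λ = V_λ ρ V_λ / p_λ. Then Σ_λ p_λ (Tr(ρ_λ P))² − (Tr(ρP))² = (Tr(ρP)Tr(ρQ) − Tr(ρPQ))² / (1 − Tr(ρQ)²). -/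
open Matrix
open scoped ComplexOrder

/-- With `ρ` a `2^N × 2^N` density matrix, `Q` a Hermitian unitary with `Q² = I`
commuting with the Hermitian operator `P`, `V_λ = (I + λQ)/2`, `p_λ = Tr(ρ V_λ)` with
`0 < p_λ < 1`, and `ρ_λ = V_λ ρ V_λ / p_λ`, one has
`Σ_λ p_λ (Tr(ρ_λ P))² − (Tr(ρP))² = (Tr(ρP)Tr(ρQ) − Tr(ρPQ))² / (1 − Tr(ρQ)²)`. -/
theorem stmt_6 {N : ℕ} (ρ Q P : Matrix (Fin (2 ^ N)) (Fin (2 ^ N)) ℂ)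
    (hρ : ρ.PosSemidef) (htr : ρ.trace = 1)
    (hQ : Q.IsHermitian) (hQ2 : Q * Q = 1)
    (hP : P.IsHermitian) (hPQ : P * Q = Q * P)
    (Vp Vm : Matrix (Fin (2 ^ N)) (Fin (2 ^ N)) ℂ)
    (hVp : Vp = (2 : ℂ)⁻¹ • (1 + Q)) (hVm : Vm = (2 : ℂ)⁻¹ • (1 - Q))
    (pp pm : ℝ)
    (hpp : (pp : ℂ) = (ρ * Vp).trace) (hpm : (pm : ℂ) = (ρ * Vm).trace)
    (hpp0 : 0 < pp) (hpp1 : pp < 1) (hpm0 : 0 < pm) (hpm1 : pm < 1)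
    (ρp ρm : Matrix (Fin (2 ^ N)) (Fin (2 ^ N)) ℂ)
    (hρp : ρp = ((pp : ℂ))⁻¹ • (Vp * ρ * Vp)) (hρm : ρm = ((pm : ℂ))⁻¹ • (Vm * ρ * Vm)) :
    pp * ((ρp * P).trace.re) ^ 2 + pm * ((ρm * P).trace.re) ^ 2 - ((ρ * P).trace.re) ^ 2
      = ((ρ * P).trace.re * (ρ * Q).trace.re - (ρ * P * Q).trace.re) ^ 2
          / (1 - ((ρ * Q).trace.re) ^ 2) := by
  set a : ℝ := (ρ * P).trace.re with ha
  set b : ℝ := (ρ * P * Q).trace.re with hb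
  set q : ℝ := (ρ * Q).trace.re with hq
  have hQPQ : Q * P * Q = P := by
    rw [← hPQ, Matrix.mul_assoc, hQ2, Matrix.mul_one]
  -- V P V identities
  have h4p : ((1 : Matrix (Fin (2 ^ N)) (Fin (2 ^ N)) ℂ) + Q) * P * (1 + Q)
      = (2 : ℂ) • (P + P * Q) := by
    have e : ((1 : Matrix (Fin (2 ^ N)) (Fin (2 ^ N)) ℂ) + Q) * P * (1 + Q)
        = P + Q * P + P * Q + Q * P * Q := by noncomm_ring
    rw [e, hQPQ, ← hPQ, two_smul]
    abel
  have h4m : ((1 : Matrix (Fin (2 ^ N)) (Fin (2 ^ N)) ℂ) - Q) * P * (1 - Q)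
      = (2 : ℂ) • (P - P * Q) := by
    have e : ((1 : Matrix (Fin (2 ^ N)) (Fin (2 ^ N)) ℂ) - Q) * P * (1 - Q)
        = P - Q * P - P * Q + Q * P * Q := by noncomm_ring
    rw [e, hQPQ, ← hPQ, two_smul]
    abel
  have hVpPVp : Vp * P * Vp = (2 : ℂ)⁻¹ • (P + P * Q) := by
    subst hVp
    simp only [Matrix.smul_mul, Matrix.mul_smul, smul_smul]
    rw [h4p, smul_smul]
    norm_num
  have hVmPVm : Vm * P * Vm = (2 : ℂ)⁻¹ • (P - P * Q) := by
    subst hVm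
    simp only [Matrix.smul_mul, Matrix.mul_smul, smul_smul]
    rw [h4m, smul_smul]
    norm_num
  -- trace computations
  have htrp : (ρp * P).trace = (pp : ℂ)⁻¹ * ((2 : ℂ)⁻¹ * ((ρ * P).trace + (ρ * P * Q).trace)) := by
    rw [hρp, Matrix.smul_mul, Matrix.trace_smul, smul_eq_mul]
    congr 1
    have h1 : Vp * ρ * Vp * P = Vp * (ρ * (Vp * P)) := by simp [Matrix.mul_assoc]
    rw [h1, Matrix.trace_mul_comm]
    have h2 : ρ * (Vp * P) * Vp = ρ * (Vp * P * Vp) := by simp [Matrix.mul_assoc]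
    rw [h2, hVpPVp, Matrix.mul_smul, Matrix.trace_smul, smul_eq_mul, Matrix.mul_add,
      Matrix.trace_add, ← Matrix.mul_assoc]
  have htrm : (ρm * P).trace = (pm : ℂ)⁻¹ * ((2 : ℂ)⁻¹ * ((ρ * P).trace - (ρ * P * Q).trace)) := by
    rw [hρm, Matrix.smul_mul, Matrix.trace_smul, smul_eq_mul]
    congr 1
    have h1 : Vm * ρ * Vm * P = Vm * (ρ * (Vm * P)) := by simp [Matrix.mul_assoc]
    rw [h1, Matrix.trace_mul_comm]
    have h2 : ρ * (Vm * P) * Vm = ρ * (Vm * P * Vm) := by simp [Matrix.mul_assoc]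
    rw [h2, hVmPVm, Matrix.mul_smul, Matrix.trace_smul, smul_eq_mul, Matrix.mul_sub,
      Matrix.trace_sub, ← Matrix.mul_assoc]
  have hppC : (pp : ℂ) = (2 : ℂ)⁻¹ * (1 + (ρ * Q).trace) := by
    rw [hpp, hVp, Matrix.mul_smul, Matrix.trace_smul, smul_eq_mul, Matrix.mul_add,
      Matrix.trace_add, Matrix.mul_one, htr]
  have hpmC : (pm : ℂ) = (2 : ℂ)⁻¹ * (1 - (ρ * Q).trace) := by
    rw [hpm, hVm, Matrix.mul_smul, Matrix.trace_smul, smul_eq_mul, Matrix.mul_sub,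
      Matrix.trace_sub, Matrix.mul_one, htr]
  have hppR : pp = 2⁻¹ * (1 + q) := by
    have h := congrArg Complex.re hppC
    simp only [Complex.ofReal_re] at h
    rw [h, show (2:ℂ)⁻¹ * (1 + (ρ * Q).trace)
        = (((2:ℝ)⁻¹ : ℝ) : ℂ) * (1 + (ρ * Q).trace) by push_cast; ring,
      Complex.re_ofReal_mul, Complex.add_re, Complex.one_re]
  have hpmR : pm = 2⁻¹ * (1 - q) := by
    have h := congrArg Complex.re hpmC
    simp only [Complex.ofReal_re] at h
    rw [h, show (2:ℂ)⁻¹ * (1 - (ρ * Q).trace)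
        = (((2:ℝ)⁻¹ : ℝ) : ℂ) * (1 - (ρ * Q).trace) by push_cast; ring,
      Complex.re_ofReal_mul, Complex.sub_re, Complex.one_re]
  have htrpR : (ρp * P).trace.re = pp⁻¹ * (2⁻¹ * (a + b)) := by
    rw [htrp, show ((pp:ℂ))⁻¹ * ((2:ℂ)⁻¹ * ((ρ * P).trace + (ρ * P * Q).trace))
        = ((pp⁻¹ * 2⁻¹ : ℝ) : ℂ) * ((ρ * P).trace + (ρ * P * Q).trace) by push_cast; ring,
      Complex.re_ofReal_mul, Complex.add_re]
    ring
  have htrmR : (ρm * P).trace.re = pm⁻¹ * (2⁻¹ * (a - b)) := by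
    rw [htrm, show ((pm:ℂ))⁻¹ * ((2:ℂ)⁻¹ * ((ρ * P).trace - (ρ * P * Q).trace))
        = ((pm⁻¹ * 2⁻¹ : ℝ) : ℂ) * ((ρ * P).trace - (ρ * P * Q).trace) by push_cast; ring,
      Complex.re_ofReal_mul, Complex.sub_re]
    ring
  have h1 : 0 < 1 + q := by rw [hppR] at hpp0; linarith
  have h2 : 0 < 1 - q := by rw [hpmR] at hpm0; linarith
  have h1n : (1 : ℝ) + q ≠ 0 := ne_of_gt h1
  have h2n : (1 : ℝ) - q ≠ 0 := ne_of_gt h2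
  have e1 : (ρp * P).trace.re = (a + b) / (1 + q) := by
    rw [htrpR, hppR]
    field_simp
  have e2 : (ρm * P).trace.re = (a - b) / (1 - q) := by
    rw [htrmR, hpmR]
    field_simp
  rw [e1, e2, hppR, hpmR, show (1 : ℝ) - q ^ 2 = (1 + q) * (1 - q) by ring]
  field_simp
  ring
end

section
/- Let M_n(ψ) = (1−n)^{-1} log( (1/2^N) Σ_{P} ⟨ψ|P|ψ⟩^{2n} ) be the stabilizer Rényi entropy (sum over the 4^N Pauli strings with phase +1). Then M_n is additive: M_n(ψ ⊗ φ) = M_n(ψ) + M_n(φ). -/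
open Matrix

/-- The single-qubit Pauli matrices `I, X, Y, Z`. -/
def pauli1 : Fin 4 → Matrix (Fin 2) (Fin 2) ℂ
  | 0 => !![1, 0; 0, 1]
  | 1 => !![0, 1; 1, 0]
  | 2 => !![0, -Complex.I; Complex.I, 0]
  | 3 => !![1, 0; 0, -1]

/-- Pure state vectors on `N` qubits. -/
abbrev nQVec (N : ℕ) := (Fin N → Fin 2) → ℂ

/-- The `N`-qubit Pauli string (with phase `+1`) labelled by `a : Fin N → Fin 4`:
the tensor product `⊗_j pauli1 (a j)`, written entrywise. -/
def PauliStr {N : ℕ} (a : Fin N → Fin 4) :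
    Matrix (Fin N → Fin 2) (Fin N → Fin 2) ℂ :=
  Matrix.of fun x y => ∏ j, pauli1 (a j) (x j) (y j)

/-- The stabilizer Rényi entropy
`M_n(ψ) = (1−n)⁻¹ log( (1/2^N) Σ_P ⟨ψ|P|ψ⟩^{2n} )`, the sum running over the `4^N`
Pauli strings with phase `+1`. -/
noncomputable def sre (n : ℝ) {N : ℕ} (ψ : nQVec N) : ℝ :=
  (1 - n)⁻¹ * Real.log ((1 / 2 ^ N : ℝ) *
    ∑ a : Fin N → Fin 4, ‖(star ψ) ⬝ᵥ ((PauliStr a).mulVec ψ)‖ ^ (2 * n))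

/-- Tensor product of pure-state vectors. -/
def vKron {a b : ℕ} (ψ : nQVec a) (φ : nQVec b) : nQVec (a + b) :=
  fun x => ψ (fun j => x (Fin.castAdd b j)) * φ (fun j => x (Fin.natAdd a j))

lemma pauli1_zero_apply (i j : Fin 2) : pauli1 0 i j = if i = j then 1 else 0 := by
  fin_cases i <;> fin_cases j <;> simp [pauli1]

lemma pauliStr_zero {N : ℕ} : PauliStr (fun _ : Fin N => (0 : Fin 4)) = 1 := by
  ext x y
  simp only [PauliStr, Matrix.of_apply, pauli1_zero_apply, Matrix.one_apply]
  by_cases h : x = y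
  · subst h; simp
  · obtain ⟨j, hj⟩ := Function.ne_iff.mp h
    rw [if_neg h]
    exact Finset.prod_eq_zero (Finset.mem_univ j) (if_neg hj)

lemma dot_id {N : ℕ} (ψ : nQVec N) :
    star ψ ⬝ᵥ (PauliStr (fun _ => (0:Fin 4))).mulVec ψ
      = ((∑ x, Complex.normSq (ψ x) : ℝ) : ℂ) := by
  rw [pauliStr_zero, one_mulVec]
  simp [dotProduct, Complex.normSq_eq_conj_mul_self]

lemma dot_kron {N₁ N₂ : ℕ} (ψ : nQVec N₁) (φ : nQVec N₂) (a : Fin (N₁ + N₂) → Fin 4) :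
    star (vKron ψ φ) ⬝ᵥ (PauliStr a).mulVec (vKron ψ φ)
      = (star ψ ⬝ᵥ (PauliStr (fun j => a (Fin.castAdd N₂ j))).mulVec ψ) *
        (star φ ⬝ᵥ (PauliStr (fun j => a (Fin.natAdd N₁ j))).mulVec φ) := by
  have hv : ∀ (x₁ : Fin N₁ → Fin 2) (x₂ : Fin N₂ → Fin 2),
      vKron ψ φ (Fin.append x₁ x₂) = ψ x₁ * φ x₂ := by
    intro x₁ x₂
    simp [vKron, Fin.append_left, Fin.append_right]
  have hP : ∀ (x₁ y₁ : Fin N₁ → Fin 2) (x₂ y₂ : Fin N₂ → Fin 2),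
      PauliStr a (Fin.append x₁ x₂) (Fin.append y₁ y₂)
        = PauliStr (fun j => a (Fin.castAdd N₂ j)) x₁ y₁ *
          PauliStr (fun j => a (Fin.natAdd N₁ j)) x₂ y₂ := by
    intro x₁ y₁ x₂ y₂
    simp only [PauliStr, Matrix.of_apply]
    rw [Fin.prod_univ_add]
    simp [Fin.append_left, Fin.append_right]
  simp only [dotProduct, mulVec, dotProduct, Pi.star_apply]
  have hsum2 : ∀ x : Fin (N₁ + N₂) → Fin 2,
      (∑ y : Fin (N₁ + N₂) → Fin 2, PauliStr a x y * vKron ψ φ y)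
        = ∑ y₁ : Fin N₁ → Fin 2, ∑ y₂ : Fin N₂ → Fin 2,
            PauliStr a x (Fin.append y₁ y₂) * vKron ψ φ (Fin.append y₁ y₂) := by
    intro x
    rw [← Equiv.sum_comp (Fin.appendEquiv N₁ N₂), Fintype.sum_prod_type]
    simp only [Fin.appendEquiv, Equiv.coe_fn_mk]
  simp only [hsum2]
  rw [← Equiv.sum_comp (Fin.appendEquiv N₁ N₂), Fintype.sum_prod_type]
  simp only [Fin.appendEquiv, Equiv.coe_fn_mk, hv, hP]
  rw [Finset.sum_mul_sum]
  refine Finset.sum_congr rfl fun x₁ _ => ?_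
  refine Finset.sum_congr rfl fun x₂ _ => ?_
  simp only [Finset.mul_sum, Finset.sum_mul, star_mul']
  rw [Finset.sum_comm]
  refine Finset.sum_congr rfl fun y₂ _ => Finset.sum_congr rfl fun y₁ _ => by ring

lemma sum_factor (n : ℝ) {N₁ N₂ : ℕ} (ψ : nQVec N₁) (φ : nQVec N₂) :
    (∑ a : Fin (N₁ + N₂) → Fin 4,
        ‖(star (vKron ψ φ)) ⬝ᵥ ((PauliStr a).mulVec (vKron ψ φ))‖ ^ (2 * n))
      = (∑ a : Fin N₁ → Fin 4, ‖(star ψ) ⬝ᵥ ((PauliStr a).mulVec ψ)‖ ^ (2 * n)) *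
        (∑ a : Fin N₂ → Fin 4, ‖(star φ) ⬝ᵥ ((PauliStr a).mulVec φ)‖ ^ (2 * n)) := by
  rw [← Equiv.sum_comp (Fin.appendEquiv N₁ N₂), Fintype.sum_prod_type, Finset.sum_mul_sum]
  refine Finset.sum_congr rfl fun a₁ _ => Finset.sum_congr rfl fun a₂ _ => ?_
  have h1 : (fun j => Fin.append a₁ a₂ (Fin.castAdd N₂ j)) = a₁ := by
    funext j; exact Fin.append_left _ _ _
  have h2 : (fun j => Fin.append a₁ a₂ (Fin.natAdd N₁ j)) = a₂ := by
    funext j; exact Fin.append_right _ _ _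
  have := dot_kron ψ φ (Fin.append a₁ a₂)
  rw [h1, h2] at this
  simp only [Fin.appendEquiv, Equiv.coe_fn_mk, this, norm_mul]
  rw [Real.mul_rpow (norm_nonneg _) (norm_nonneg _)]

lemma one_le_sum (n : ℝ) {N : ℕ} (ψ : nQVec N) (hψ : ∑ x, Complex.normSq (ψ x) = 1) :
    1 ≤ ∑ a : Fin N → Fin 4, ‖(star ψ) ⬝ᵥ ((PauliStr a).mulVec ψ)‖ ^ (2 * n) := by
  have h0 : ‖(star ψ) ⬝ᵥ ((PauliStr (fun _ : Fin N => (0:Fin 4))).mulVec ψ)‖ ^ (2*n) = 1 := by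
    rw [dot_id, hψ]
    simp
  rw [← h0]
  exact Finset.single_le_sum
    (f := fun a : Fin N → Fin 4 => ‖(star ψ) ⬝ᵥ ((PauliStr a).mulVec ψ)‖ ^ (2*n))
    (fun a _ => Real.rpow_nonneg (norm_nonneg _) _) (Finset.mem_univ _)

/-- The stabilizer Rényi entropy is additive under tensor products:
`M_n(ψ ⊗ φ) = M_n(ψ) + M_n(φ)` for normalized pure states `ψ, φ`. -/
theorem stmt_13 (n : ℝ) {N₁ N₂ : ℕ} (ψ : nQVec N₁) (φ : nQVec N₂)
    (hψ : ∑ x, Complex.normSq (ψ x) = 1) (hφ : ∑ x, Complex.normSq (φ x) = 1) :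
    sre n (vKron ψ φ) = sre n ψ + sre n φ := by
  unfold sre
  rw [sum_factor]
  set S₁ := ∑ a : Fin N₁ → Fin 4, ‖(star ψ) ⬝ᵥ ((PauliStr a).mulVec ψ)‖ ^ (2 * n)
  set S₂ := ∑ a : Fin N₂ → Fin 4, ‖(star φ) ⬝ᵥ ((PauliStr a).mulVec φ)‖ ^ (2 * n)
  have hS₁ : (0:ℝ) < (1 / 2 ^ N₁ : ℝ) * S₁ :=
    mul_pos (by positivity) (lt_of_lt_of_le one_pos (one_le_sum n ψ hψ))
  have hS₂ : (0:ℝ) < (1 / 2 ^ N₂ : ℝ) * S₂ :=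
    mul_pos (by positivity) (lt_of_lt_of_le one_pos (one_le_sum n φ hφ))
  have hfac : (1 / 2 ^ (N₁ + N₂) : ℝ) * (S₁ * S₂)
      = ((1 / 2 ^ N₁ : ℝ) * S₁) * ((1 / 2 ^ N₂ : ℝ) * S₂) := by
    rw [pow_add]; ring
  rw [hfac, Real.log_mul hS₁.ne' hS₂.ne']
  ring
end
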